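/- Let S be an additively idempotent semiring and n ≥ 2 such that M_n(S) is congruence-simple. Then for every a, b, e ∈ S with a ≠ b there exist c, d, f, g ∈ S such that ca + fe ≠ cb + fe and ad + eg ≠ bd + eg. -/

import Mathlib

def IsCong {T : Type} (add mul : T → T → T) (r : T → T → Prop) : Prop :=
  Equivalence r ∧ (∀ a b c d, r a b → r c d → r (add a c) (add b d)) ∧
    (∀ a b c d, r a b → r c d → r (mul a c) (mul b d))

def SubIrr {T : Type} (add mul : T → T → T) : Prop :=
  ∃ r : T → T → Prop, IsCong add mul r ∧ r ≠ (· = ·) ∧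
    ∀ s : T → T → Prop, IsCong add mul s → s ≠ (· = ·) → ∀ a b, r a b → s a b

def CongSimple {T : Type} (add mul : T → T → T) : Prop :=
  (∃ a b : T, a ≠ b) ∧
    ∀ r : T → T → Prop, IsCong add mul r → r = (· = ·) ∨ r = fun _ _ => True

def IsSemiring {S : Type} (add mul : S → S → S) : Prop :=
  (∀ a b, add a b = add b a) ∧ (∀ a b c, add (add a b) c = add a (add b c)) ∧
    (∀ a b c, mul (mul a b) c = mul a (mul b c)) ∧
    (∀ a b c, mul a (add b c) = add (mul a b) (mul a c)) ∧
    (∀ a b c, mul (add a b) c = add (mul a c) (mul b c))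

def finSum {S : Type} (add : S → S → S) : {n : ℕ} → (Fin (n + 1) → S) → S
  | 0, f => f 0
  | _ + 1, f => add (finSum add fun i => f i.castSucc) (f (Fin.last _))

def matAdd {S : Type} (add : S → S → S) {n : ℕ} (A B : Fin n → Fin n → S) :
    Fin n → Fin n → S :=
  fun i j => add (A i j) (B i j)

def matMul {S : Type} (add mul : S → S → S) {n : ℕ}
    (A B : Fin (n + 1) → Fin (n + 1) → S) : Fin (n + 1) → Fin (n + 1) → S :=
  fun i j => finSum add fun k => mul (A i k) (B k j)

def AlmostIntegral {S : Type} (add mul : S → S → S) : Prop :=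
  IsSemiring add mul ∧ (∀ a : S, add a a = a) ∧
    ∀ a b : S, add (add (mul a b) (mul b a)) a = a

def IsZero {S : Type} (add mul : S → S → S) (z : S) : Prop :=
  ∀ x, mul z x = z ∧ mul x z = z ∧ add z x = x

def SepCond {S : Type} (mul : S → S → S) (z : S) (a b : S) : Prop :=
  (a ≠ z ∧ b = z) ∨ (∃ c, mul c a ≠ z ∧ mul c b = z) ∨
    (∃ d, mul a d ≠ z ∧ mul b d = z) ∨
    ∃ c d, mul (mul c a) d ≠ z ∧ mul (mul c b) d = z

section Aux
variable {S : Type} (add mul : S → S → S)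

lemma finSum_congr {n : ℕ} {f g : Fin (n + 1) → S} (h : ∀ k, f k = g k) :
    finSum add f = finSum add g := by rw [funext h]

lemma add4 (hc : ∀ a b, add a b = add b a)
    (ha : ∀ a b c, add (add a b) c = add a (add b c)) (X Y x y : S) :
    add (add X Y) (add x y) = add (add X x) (add Y y) := by
  rw [ha X Y (add x y), ← ha Y x y, hc Y x, ha x Y y, ← ha X x (add Y y)]

lemma finSum_const (hidem : ∀ a : S, add a a = a) :
    ∀ (n : ℕ) (t : S), finSum add (fun _ : Fin (n + 1) => t) = t
  | 0, t => rfl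
  | n + 1, t => by
      show add (finSum add fun _ : Fin (n + 1) => t) t = t
      rw [finSum_const hidem n t, hidem]

lemma finSum_add (hc : ∀ a b, add a b = add b a)
    (ha : ∀ a b c, add (add a b) c = add a (add b c)) :
    ∀ (n : ℕ) (f g : Fin (n + 1) → S),
      finSum add (fun k => add (f k) (g k)) = add (finSum add f) (finSum add g)
  | 0, f, g => rfl
  | n + 1, f, g => by
      show add (finSum add fun k : Fin (n + 1) => add (f k.castSucc) (g k.castSucc))
          (add (f (Fin.last _)) (g (Fin.last _))) = _
      rw [finSum_add hc ha n]
      exact add4 add hc ha _ _ _ _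

lemma mul_finSum (hdl : ∀ a b c, mul a (add b c) = add (mul a b) (mul a c)) :
    ∀ (n : ℕ) (x : S) (f : Fin (n + 1) → S),
      mul x (finSum add f) = finSum add fun k => mul x (f k)
  | 0, x, f => rfl
  | n + 1, x, f => by
      show mul x (add (finSum add fun k : Fin (n + 1) => f k.castSucc) (f (Fin.last _)))
        = add (finSum add fun k : Fin (n + 1) => mul x (f k.castSucc)) (mul x (f (Fin.last _)))
      rw [hdl, mul_finSum hdl n]

lemma finSum_mul (hdr : ∀ a b c, mul (add a b) c = add (mul a c) (mul b c)) :
    ∀ (n : ℕ) (x : S) (f : Fin (n + 1) → S),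
      mul (finSum add f) x = finSum add fun k => mul (f k) x
  | 0, x, f => rfl
  | n + 1, x, f => by
      show mul (add (finSum add fun k : Fin (n + 1) => f k.castSucc) (f (Fin.last _))) x
        = add (finSum add fun k : Fin (n + 1) => mul (f k.castSucc) x) (mul (f (Fin.last _)) x)
      rw [hdr, finSum_mul hdr n]

lemma finSum_swap (hc : ∀ a b, add a b = add b a)
    (ha : ∀ a b c, add (add a b) c = add a (add b c)) :
    ∀ (n p : ℕ) (f : Fin (n + 1) → Fin (p + 1) → S),
      finSum add (fun k => finSum add fun l => f k l)
        = finSum add (fun l => finSum add fun k => f k l)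
  | 0, p, f => rfl
  | n + 1, p, f => by
      show add (finSum add fun k : Fin (n + 1) => finSum add fun l => f k.castSucc l)
          (finSum add fun l => f (Fin.last _) l) = _
      rw [finSum_swap hc ha n p, ← finSum_add add hc ha]
      rfl

lemma splitA (hdr : ∀ a b c, mul (add a b) c = add (mul a c) (mul b c))
    (ha : ∀ a b c, add (add a b) c = add a (add b c)) :
    ∀ (n : ℕ) (c : Fin (n + 2) → S) (a e : S),
      finSum add (fun k => mul (c k) (if k = 0 then a else e))
        = add (mul (c 0) a) (mul (finSum add fun k : Fin (n + 1) => c k.succ) e)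
  | 0, c, a, e => by
      simp only [finSum, Fin.isValue]
      norm_num [Fin.ext_iff]
      rfl
  | n + 1, c, a, e => by
      have step : finSum add (fun k : Fin (n + 1 + 2) => mul (c k) (if k = 0 then a else e))
          = add (finSum add fun k : Fin (n + 2) =>
              mul (c k.castSucc) (if k.castSucc = 0 then a else e))
            (mul (c (Fin.last (n + 2))) (if (Fin.last (n + 2) : Fin (n + 3)) = 0 then a else e)) := rfl
      rw [step, if_neg (by simp [Fin.ext_iff] : ¬ (Fin.last (n + 2) : Fin (n + 3)) = 0)]
      have h1 : (fun k : Fin (n + 2) => mul (c k.castSucc) (if k.castSucc = 0 then a else e))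
          = fun k : Fin (n + 2) => mul (c k.castSucc) (if k = 0 then a else e) := by
        funext k; simp only [Fin.castSucc_eq_zero_iff]
      rw [h1, splitA hdr ha n (fun k => c k.castSucc) a e]
      have h2 : (finSum add fun k : Fin (n + 2) => c k.succ)
          = add (finSum add fun k : Fin (n + 1) => c k.succ.castSucc) (c (Fin.last (n + 2))) := by
        rfl
      rw [ha, ← hdr, Fin.castSucc_zero, h2]

lemma F0 (hidem : ∀ a : S, add a a = a)
    (ha : ∀ a b c, add (add a b) c = add a (add b c)) :
    ∀ (n : ℕ) (p q : S),
      finSum add (fun k : Fin (n + 2) => if k = 0 then p else q) = add p q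
  | 0, p, q => by
      simp [finSum, Fin.ext_iff]
  | n + 1, p, q => by
      have step : finSum add (fun k : Fin (n + 1 + 2) => if k = 0 then p else q)
          = add (finSum add fun k : Fin (n + 2) => if k.castSucc = 0 then p else q)
            (if (Fin.last (n + 2) : Fin (n + 3)) = 0 then p else q) := rfl
      rw [step, if_neg (by simp [Fin.ext_iff] : ¬ (Fin.last (n + 2) : Fin (n + 3)) = 0)]
      have h1 : (fun k : Fin (n + 2) => if k.castSucc = 0 then p else q)
          = fun k : Fin (n + 2) => if k = 0 then p else q := by
        funext k; simp only [Fin.castSucc_eq_zero_iff]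
      rw [h1, F0 hidem ha n p q, ha, hidem]

lemma Flast (hidem : ∀ a : S, add a a = a) (n : ℕ) (p q : S) :
    finSum add (fun k : Fin (n + 2) => if k = Fin.last (n + 1) then p else q) = add q p := by
  show add (finSum add fun k : Fin (n + 1) => if k.castSucc = Fin.last (n + 1) then p else q)
      (if (Fin.last (n + 1) : Fin (n + 2)) = Fin.last (n + 1) then p else q) = add q p
  rw [finSum_congr add (g := fun _ : Fin (n + 1) => q)
      (fun k => if_neg (Fin.castSucc_lt_last k).ne)]
  rw [finSum_const add hidem, if_pos rfl]

lemma matMul_assoc (hc : ∀ a b, add a b = add b a)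
    (ha : ∀ a b c, add (add a b) c = add a (add b c))
    (hma : ∀ a b c, mul (mul a b) c = mul a (mul b c))
    (hdl : ∀ a b c, mul a (add b c) = add (mul a b) (mul a c))
    (hdr : ∀ a b c, mul (add a b) c = add (mul a c) (mul b c))
    {n : ℕ} (A B C : Fin (n + 1) → Fin (n + 1) → S) :
    matMul add mul (matMul add mul A B) C = matMul add mul A (matMul add mul B C) := by
  funext i j
  show finSum add (fun k => mul (finSum add fun l => mul (A i l) (B l k)) (C k j))
    = finSum add fun l => mul (A i l) (finSum add fun k => mul (B l k) (C k j))
  rw [finSum_congr add (g := fun k =>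
        finSum add fun l => mul (A i l) (mul (B l k) (C k j)))
      (fun k => by
        rw [finSum_mul add mul hdr]
        exact finSum_congr add fun l => hma _ _ _)]
  rw [finSum_swap add hc ha]
  exact finSum_congr add fun l => (mul_finSum add mul hdl _ _ _).symm

lemma matMul_add_right (hc : ∀ a b, add a b = add b a)
    (ha : ∀ a b c, add (add a b) c = add a (add b c))
    (hdl : ∀ a b c, mul a (add b c) = add (mul a b) (mul a c))
    {n : ℕ} (C X Y : Fin (n + 1) → Fin (n + 1) → S) :
    matMul add mul C (matAdd add X Y)
      = matAdd add (matMul add mul C X) (matMul add mul C Y) := by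
  funext i j
  show finSum add (fun k => mul (C i k) (add (X k j) (Y k j)))
    = add (finSum add fun k => mul (C i k) (X k j)) (finSum add fun k => mul (C i k) (Y k j))
  rw [finSum_congr add (g := fun k => add (mul (C i k) (X k j)) (mul (C i k) (Y k j)))
      (fun k => hdl _ _ _)]
  exact finSum_add add hc ha _ _ _


end Aux


lemma core {S : Type} (add mul : S → S → S) (hS : IsSemiring add mul)
    (hidem : ∀ a : S, add a a = a) (m : ℕ)
    (hsimple : CongSimple (T := Fin (m + 2) → Fin (m + 2) → S) (matAdd add) (matMul add mul))
    (a b e : S) (hab : a ≠ b)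
    (hcase : ∀ c f, add (mul c a) (mul f e) = add (mul c b) (mul f e)) : False := by
  obtain ⟨hc, ha, hma, hdl, hdr⟩ := hS
  -- the relation r X Y := ∀ C, C X = C Y
  set r : (Fin (m + 2) → Fin (m + 2) → S) → (Fin (m + 2) → Fin (m + 2) → S) → Prop :=
    fun X Y => ∀ C, matMul add mul C X = matMul add mul C Y with hr_def
  have hr : IsCong (matAdd add) (matMul add mul) r := by
    refine ⟨⟨fun X C => rfl, fun h C => (h C).symm, fun h1 h2 C => (h1 C).trans (h2 C)⟩, ?_, ?_⟩
    · intro X Y X' Y' h h' C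
      rw [matMul_add_right add mul hc ha hdl, matMul_add_right add mul hc ha hdl, h C, h' C]
    · intro X Y X' Y' h h' C
      rw [← matMul_assoc add mul hc ha hma hdl hdr, h C, h' (matMul add mul C Y),
        matMul_assoc add mul hc ha hma hdl hdr]
  -- r relates the two distinct matrices A and B
  have hrAB : r (fun k _ => if k = 0 then a else e) (fun k _ => if k = 0 then b else e) := by
    intro C
    funext i j
    show finSum add (fun k => mul (C i k) (if k = 0 then a else e))
      = finSum add (fun k => mul (C i k) (if k = 0 then b else e))
    rw [splitA add mul hdr ha, splitA add mul hdr ha, hcase]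
  have hABne : (fun (k : Fin (m + 2)) (_ : Fin (m + 2)) => if k = 0 then a else e)
      ≠ (fun k _ => if k = 0 then b else e) := by
    intro h
    have := congrFun (congrFun h 0) 0
    simp only [if_pos rfl] at this
    exact hab this
  have hrfull : ∀ X Y, r X Y := by
    rcases hsimple.2 r hr with h | h
    · rw [h] at hrAB
      exact absurd hrAB hABne
    · intro X Y; rw [h]; trivial
  -- extract: mul w u = mul w v for all w u v
  have hL : ∀ w u v : S, mul w u = mul w v := by
    intro w u v
    have h2 := congrFun (congrFun (hrfull (fun _ _ => u) (fun _ _ => v) (fun _ _ => w)) 0) 0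
    have e1 : matMul add mul (fun _ _ => w) (fun (_ _ : Fin (m + 2)) => u) 0 0 = mul w u :=
      finSum_const add hidem (m + 1) (mul w u)
    have e2 : matMul add mul (fun _ _ => w) (fun (_ _ : Fin (m + 2)) => v) 0 0 = mul w v :=
      finSum_const add hidem (m + 1) (mul w v)
    rw [e1, e2] at h2
    exact h2
  -- the row-sum congruence
  set ρ : (Fin (m + 2) → Fin (m + 2) → S) → Fin (m + 2) → S :=
    fun X i => finSum add (fun k => mul (X i k) (X i k)) with hρ_def
  set cρ : (Fin (m + 2) → Fin (m + 2) → S) → (Fin (m + 2) → Fin (m + 2) → S) → Prop :=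
    fun X Y => ∀ i, ρ X i = ρ Y i with hcρ_def
  have hsq : ∀ u v : S, mul (add u v) (add u v) = add (mul u u) (mul v v) := by
    intro u v
    rw [hdr, hL u (add u v) u, hL v (add u v) v]
  have hcρ : IsCong (matAdd add) (matMul add mul) cρ := by
    refine ⟨⟨fun X i => rfl, fun h i => (h i).symm, fun h1 h2 i => (h1 i).trans (h2 i)⟩, ?_, ?_⟩
    · intro X Y X' Y' h h' i
      have key : ∀ Z Z' : Fin (m + 2) → Fin (m + 2) → S,
          ρ (matAdd add Z Z') i = add (ρ Z i) (ρ Z' i) := by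
        intro Z Z'
        show finSum add (fun k => mul (add (Z i k) (Z' i k)) (add (Z i k) (Z' i k)))
          = add (finSum add fun k => mul (Z i k) (Z i k)) (finSum add fun k => mul (Z' i k) (Z' i k))
        rw [finSum_congr add (g := fun k => add (mul (Z i k) (Z i k)) (mul (Z' i k) (Z' i k)))
            (fun k => hsq _ _)]
        exact finSum_add add hc ha _ _ _
      rw [key, key, h i, h' i]
    · intro X Y X' Y' h h' i
      have key : ∀ Z Z' : Fin (m + 2) → Fin (m + 2) → S,
          ρ (matMul add mul Z Z') i = mul (ρ Z i) (ρ Z i) := by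
        intro Z Z'
        have hent : ∀ k, matMul add mul Z Z' i k = ρ Z i := by
          intro k
          exact finSum_congr add fun l => hL (Z i l) (Z' l k) (Z i l)
        show finSum add (fun k => mul (matMul add mul Z Z' i k) (matMul add mul Z Z' i k))
          = mul (ρ Z i) (ρ Z i)
        rw [finSum_congr add (g := fun _ => mul (ρ Z i) (ρ Z i)) (fun k => by rw [hent k])]
        exact finSum_const add hidem _ _
      rw [key, key, h i]
  -- cρ relates two distinct matrices
  set X1 : Fin (m + 2) → Fin (m + 2) → S :=
    fun i k => if i = 0 then (if k = 0 then a else b) else b with hX1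
  set Y1 : Fin (m + 2) → Fin (m + 2) → S :=
    fun i k => if i = 0 then (if k = Fin.last (m + 1) then a else b) else b with hY1
  have hlast0 : (Fin.last (m + 1) : Fin (m + 2)) ≠ 0 := by
    simp [Fin.ext_iff]
  have hX1Y1ne : X1 ≠ Y1 := by
    intro h
    have := congrFun (congrFun h 0) 0
    simp only [hX1, hY1, if_pos rfl, if_neg (Ne.symm hlast0 : (0 : Fin (m+2)) ≠ Fin.last (m+1))] at this
    exact hab this
  have hcρX1Y1 : cρ X1 Y1 := by
    intro i
    by_cases hi : i = 0
    · subst hi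
      show finSum add (fun k => mul (X1 0 k) (X1 0 k)) = finSum add (fun k => mul (Y1 0 k) (Y1 0 k))
      have e1 : ∀ k : Fin (m + 2), mul (X1 0 k) (X1 0 k)
          = (if k = 0 then mul a a else mul b b) := by
        intro k; simp only [hX1, if_pos rfl]; split <;> rfl
      have e2 : ∀ k : Fin (m + 2), mul (Y1 0 k) (Y1 0 k)
          = (if k = Fin.last (m + 1) then mul a a else mul b b) := by
        intro k; simp only [hY1, if_pos rfl]; split <;> rfl
      rw [finSum_congr add e1, finSum_congr add e2, F0 add hidem ha, Flast add hidem, hc]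
    · show finSum add (fun k => mul (X1 i k) (X1 i k)) = finSum add (fun k => mul (Y1 i k) (Y1 i k))
      refine finSum_congr add fun k => ?_
      simp only [hX1, hY1, if_neg hi]
  have hcρfull : ∀ X Y, cρ X Y := by
    rcases hsimple.2 cρ hcρ with h | h
    · rw [h] at hcρX1Y1
      exact absurd hcρX1Y1 hX1Y1ne
    · intro X Y; rw [h]; trivial
  -- all products are equal to p := mul a a
  have hp : ∀ u v : S, mul u v = mul a a := by
    intro u v
    have h2 := hcρfull (fun _ _ => u) (fun _ _ => a) 0
    have e1 : ρ (fun _ _ => u) 0 = mul u u := finSum_const add hidem _ _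
    have e2 : ρ (fun _ _ => a) 0 = mul a a := finSum_const add hidem _ _
    rw [e1, e2] at h2
    rw [hL u v u, h2]
  -- the (0,0)-entry congruence
  set c0 : (Fin (m + 2) → Fin (m + 2) → S) → (Fin (m + 2) → Fin (m + 2) → S) → Prop :=
    fun X Y => X 0 0 = Y 0 0 with hc0_def
  have hc0 : IsCong (matAdd add) (matMul add mul) c0 := by
    refine ⟨⟨fun X => rfl, fun h => h.symm, fun h1 h2 => h1.trans h2⟩, ?_, ?_⟩
    · intro X Y X' Y' h h'
      show add (X 0 0) (X' 0 0) = add (Y 0 0) (Y' 0 0)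
      rw [h, h']
    · intro X Y X' Y' h h'
      show matMul add mul X X' 0 0 = matMul add mul Y Y' 0 0
      have key : ∀ Z Z' : Fin (m + 2) → Fin (m + 2) → S,
          matMul add mul Z Z' 0 0 = mul a a := by
        intro Z Z'
        show finSum add (fun k => mul (Z 0 k) (Z' k 0)) = mul a a
        rw [finSum_congr add (g := fun _ => mul a a) (fun k => hp _ _)]
        exact finSum_const add hidem _ _
      rw [key, key]
  have h10 : (1 : Fin (m + 2)) ≠ 0 := by
    simp [Fin.ext_iff]
  rcases hsimple.2 c0 hc0 with h | h
  · -- c0 would be equality: contradiction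
    have hxy : c0 (fun _ _ => a) (fun _ k => if k = 0 then a else b) := by
      show a = if (0 : Fin (m + 2)) = 0 then a else b
      rw [if_pos rfl]
    rw [h] at hxy
    have := congrFun (congrFun hxy 0) 1
    rw [if_neg h10] at this
    exact hab this
  · -- c0 would be trivial: contradiction
    have hxy : c0 (fun _ _ => a) (fun _ _ => b) := by rw [h]; trivial
    exact hab hxy

lemma congSimple_op {S : Type} (add mul : S → S → S) (m : ℕ)
    (hsimple : CongSimple (T := Fin (m + 2) → Fin (m + 2) → S) (matAdd add) (matMul add mul)) :
    CongSimple (T := Fin (m + 2) → Fin (m + 2) → S) (matAdd add)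
      (matMul add (fun x y => mul y x)) := by
  obtain ⟨hex, hsim⟩ := hsimple
  refine ⟨hex, ?_⟩
  intro r' hr'
  have key : IsCong (matAdd add) (matMul add mul)
      (fun X Y => r' (fun i j => X j i) (fun i j => Y j i)) := by
    refine ⟨⟨fun X => hr'.1.refl _, fun h => hr'.1.symm h, fun h1 h2 => hr'.1.trans h1 h2⟩,
      ?_, ?_⟩
    · intro A B C D h1 h2
      exact hr'.2.1 _ _ _ _ h1 h2
    · intro A B C D h1 h2
      exact hr'.2.2 (fun i j => C j i) (fun i j => D j i) (fun i j => A j i) (fun i j => B j i) h2 h1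
  rcases hsim _ key with h | h
  · left
    funext X Y
    have h2 : r' X Y = ((fun i j => X j i) = (fun i j => Y j i)) :=
      congrFun (congrFun h (fun i j => X j i)) (fun i j => Y j i)
    rw [h2]
    apply propext
    constructor
    · intro hXY
      funext i j
      exact congrFun (congrFun hXY j) i
    · intro hXY
      subst hXY
      rfl
  · right
    funext X Y
    exact congrFun (congrFun h (fun i j => X j i)) (fun i j => Y j i)


/-- If `M_n(S)` is congruence-simple for an additively idempotent `S` and
`n ≥ 2`, then a separation condition holds in `S`. -/
theorem stmt_4 {S : Type} (add mul : S → S → S) (hS : IsSemiring add mul)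
    (hidem : ∀ a : S, add a a = a) (m : ℕ)
    (hsimple : CongSimple (T := Fin (m + 2) → Fin (m + 2) → S) (matAdd add) (matMul add mul)) :
    ∀ a b e : S, a ≠ b → ∃ c d f g : S,
      add (mul c a) (mul f e) ≠ add (mul c b) (mul f e) ∧
        add (mul a d) (mul e g) ≠ add (mul b d) (mul e g) := by
  intro a b e hab
  by_contra hn
  push_neg at hn
  by_cases h1 : ∀ c f, add (mul c a) (mul f e) = add (mul c b) (mul f e)
  · exact core add mul hS hidem m hsimple a b e hab h1
  · push_neg at h1
    obtain ⟨c, f, hcf⟩ := h1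
    have h2 : ∀ d g, add (mul a d) (mul e g) = add (mul b d) (mul e g) := by
      intro d g
      exact hn c d f g hcf
    obtain ⟨hc, ha, hma, hdl, hdr⟩ := hS
    have hS' : IsSemiring add (fun x y => mul y x) :=
      ⟨hc, ha, fun x y z => (hma z y x).symm, fun x y z => hdr y z x, fun x y z => hdl z x y⟩
    exact core add (fun x y => mul y x) hS' hidem m (congSimple_op add mul m hsimple)
      a b e hab h2
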